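/- For each irreducible finite root system of rank n with exponents e_1,…,e_n and Coxeter number h, the product Π_{i=1}^n (e_i + h + 1)/(e_i + 1) is an integer; in the classical cases it evaluates to: type A_n: (1/(n+2))·binom(2n+2,n+1); types B_n/C_n: binom(2n,n); type D_n: ((3n−2)/n)·binom(2n−2,n−1). -/
import Mathlib

open Finset

private lemma prodIccShift (k : ℕ) : ∀ n : ℕ,
    (∏ i ∈ Finset.Icc 1 n, ((i : ℚ) + k)) = (Nat.factorial (n + k)) / (Nat.factorial k)
  | 0 => by simp [div_self (by positivity : ((Nat.factorial k : ℚ)) ≠ 0)]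
  | (n+1) => by
    rw [Finset.prod_Icc_succ_top (Nat.le_add_left 1 n), prodIccShift k n,
      show n + 1 + k = (n + k) + 1 from by ring, Nat.factorial_succ]
    have hk : (Nat.factorial k : ℚ) ≠ 0 := by positivity
    push_cast
    field_simp
    ring

private lemma catalan_cast (k : ℕ) :
    (catalan k : ℚ) = ((2 * k).choose k : ℚ) / (k + 1) := by
  have h := succ_mul_catalan_eq_centralBinom k
  have : ((k : ℚ) + 1) * (catalan k : ℚ) = ((2 * k).choose k : ℚ) := by
    rw [← Nat.centralBinom_eq_two_mul_choose]
    exact_mod_cast congrArg (Nat.cast : ℕ → ℚ) h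
  have hk : ((k : ℚ) + 1) ≠ 0 := by positivity
  rw [eq_div_iff hk]
  linarith [this]

private lemma prodB (k : ℕ) :
    (∏ i ∈ Finset.Icc 1 k, ((2 * (i : ℚ) - 1) + 2 * k + 1) / ((2 * (i : ℚ) - 1) + 1)) =
      ((2 * k).choose k : ℚ) := by
  have hcongr : (∏ i ∈ Finset.Icc 1 k, ((2 * (i : ℚ) - 1) + 2 * k + 1) / ((2 * (i : ℚ) - 1) + 1))
      = ∏ i ∈ Finset.Icc 1 k, ((i : ℚ) + k) / ((i : ℚ) + ((0 : ℕ) : ℚ)) := by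
    refine Finset.prod_congr rfl fun i hi => ?_
    have h1 : 1 ≤ i := (Finset.mem_Icc.mp hi).1
    have hi0 : (i : ℚ) ≠ 0 := by exact_mod_cast Nat.pos_of_ne_zero (by omega) |>.ne'
    rw [show (2 * (i : ℚ) - 1) + 2 * k + 1 = 2 * ((i : ℚ) + k) from by ring,
      show (2 * (i : ℚ) - 1) + 1 = 2 * (i : ℚ) from by ring,
      show ((i : ℚ) + ((0 : ℕ) : ℚ)) = (i : ℚ) from by push_cast; ring,
      mul_div_mul_left _ _ (by norm_num : (2:ℚ) ≠ 0)]
  rw [hcongr, Finset.prod_div_distrib, prodIccShift k k, prodIccShift 0 k,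
    Nat.cast_choose ℚ (by omega : k ≤ 2 * k), two_mul, Nat.add_sub_cancel]
  have h1 : (Nat.factorial k : ℚ) ≠ 0 := by positivity
  have h2 : (Nat.factorial (k + k) : ℚ) ≠ 0 := by positivity
  simp [Nat.factorial]
  field_simp

theorem stmt19 (n : ℕ) :
    -- type Aₙ : exponents eᵢ = i, h = n+1
    (1 ≤ n →
      (∏ i ∈ Finset.Icc 1 n, ((i : ℚ) + (n + 1) + 1) / (i + 1)) =
          (1 / (n + 2)) * (Nat.choose (2 * n + 2) (n + 1) : ℚ) ∧
      ∃ m : ℕ, (∏ i ∈ Finset.Icc 1 n, ((i : ℚ) + (n + 1) + 1) / (i + 1)) = m) ∧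
    -- types Bₙ, Cₙ : exponents eᵢ = 2i−1, h = 2n
    (1 ≤ n →
      (∏ i ∈ Finset.Icc 1 n, ((2 * (i : ℚ) - 1) + 2 * n + 1) / ((2 * (i : ℚ) - 1) + 1)) =
          (Nat.choose (2 * n) n : ℚ) ∧
      ∃ m : ℕ,
        (∏ i ∈ Finset.Icc 1 n, ((2 * (i : ℚ) - 1) + 2 * n + 1) / ((2 * (i : ℚ) - 1) + 1)) = m) ∧
    -- type Dₙ : exponents 1, 3, …, 2n−3 together with n−1, h = 2n−2
    (2 ≤ n →
      ((∏ i ∈ Finset.Icc 1 (n - 1),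
          ((2 * (i : ℚ) - 1) + (2 * n - 2) + 1) / ((2 * (i : ℚ) - 1) + 1)) *
        (((n : ℚ) - 1 + (2 * n - 2) + 1) / ((n - 1) + 1))) =
          ((3 * (n : ℚ) - 2) / n) * (Nat.choose (2 * n - 2) (n - 1) : ℚ) ∧
      ∃ m : ℕ,
        ((∏ i ∈ Finset.Icc 1 (n - 1),
            ((2 * (i : ℚ) - 1) + (2 * n - 2) + 1) / ((2 * (i : ℚ) - 1) + 1)) *
          (((n : ℚ) - 1 + (2 * n - 2) + 1) / ((n - 1) + 1))) = m) := by
  refine ⟨fun hn => ?_, fun hn => ?_, fun hn => ?_⟩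
  · -- type A
    have hA : (∏ i ∈ Finset.Icc 1 n, ((i : ℚ) + (n + 1) + 1) / (i + 1)) =
        (1 / (n + 2)) * (Nat.choose (2 * n + 2) (n + 1) : ℚ) := by
      have hcongr : (∏ i ∈ Finset.Icc 1 n, ((i : ℚ) + (n + 1) + 1) / (i + 1))
          = ∏ i ∈ Finset.Icc 1 n, ((i : ℚ) + ((n + 2 : ℕ) : ℚ)) / ((i : ℚ) + ((1 : ℕ) : ℚ)) := by
        refine Finset.prod_congr rfl fun i _ => ?_
        push_cast; ring_nf
      rw [hcongr, Finset.prod_div_distrib, prodIccShift (n + 2) n, prodIccShift 1 n,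
        Nat.cast_choose ℚ (by omega : n + 1 ≤ 2 * n + 2),
        show 2 * n + 2 - (n + 1) = n + 1 from by omega,
        show 2 * n + 2 = n + (n + 2) from by omega,
        show n + (n + 2) = (n + 1) + 1 + n from by omega]
      have h1 : (Nat.factorial (n + 1) : ℚ) ≠ 0 := by positivity
      have h2 : (Nat.factorial (n + 2) : ℚ) ≠ 0 := by positivity
      rw [show n + 2 = (n + 1) + 1 from rfl, Nat.factorial_succ (n+1)]
      have h3 : ((n:ℚ) + 2) ≠ 0 := by positivity
      push_cast
      rw [div_div_eq_mul_div, div_mul_eq_mul_div, div_div]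
      simp only [Nat.factorial_one, Nat.cast_one, mul_one]
      rw [one_div, inv_mul_eq_div, div_div, mul_assoc]
      ring
    refine ⟨hA, catalan (n + 1), ?_⟩
    rw [hA, catalan_cast (n + 1)]
    rw [show 2 * (n + 1) = 2 * n + 2 from by ring]
    push_cast
    ring
  · -- type B
    refine ⟨prodB n, (2 * n).choose n, prodB n⟩
  · -- type D
    obtain ⟨k, rfl⟩ : ∃ k, n = k + 1 := ⟨n - 1, by omega⟩
    have hk : 1 ≤ k := by omega
    simp only [show k + 1 - 1 = k from rfl, show 2 * (k + 1) - 2 = 2 * k from by omega]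
    have hsub : k + 1 - 1 = k := rfl
    have hsub2 : 2 * (k + 1) - 2 = 2 * k := by omega
    have hcast : ((k : ℚ) + 1) ≠ 0 := by positivity
    have hprod : (∏ i ∈ Finset.Icc 1 k,
        ((2 * (i : ℚ) - 1) + (2 * ((k:ℚ) + 1) - 2) + 1) / ((2 * (i : ℚ) - 1) + 1)) =
        ((2 * k).choose k : ℚ) := by
      rw [← prodB k]
      refine Finset.prod_congr rfl fun i _ => ?_
      push_cast; ring_nf
    have hlast : (((k : ℚ) + 1) - 1 + (2 * ((k:ℚ) + 1) - 2) + 1) / ((((k:ℚ)+1) - 1) + 1)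
        = (3 * (k:ℚ) + 1) / ((k:ℚ) + 1) := by ring_nf
    have hD : (∏ i ∈ Finset.Icc 1 k,
          ((2 * (i : ℚ) - 1) + (2 * ((k:ℚ)+1) - 2) + 1) / ((2 * (i : ℚ) - 1) + 1)) *
        ((((k:ℚ)+1) - 1 + (2 * ((k:ℚ)+1) - 2) + 1) / ((((k:ℚ)+1) - 1) + 1))
        = ((2 * k).choose k : ℚ) * ((3 * (k:ℚ) + 1) / ((k:ℚ) + 1)) := by
      rw [hprod, hlast]
    push_cast at hD ⊢
    constructor
    · rw [hD]
      field_simp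
      ring
    · refine ⟨3 * (2 * k).choose k - 2 * catalan k, ?_⟩
      have hle : 2 * catalan k ≤ 3 * (2 * k).choose k := by
        have h := succ_mul_catalan_eq_centralBinom k
        rw [Nat.centralBinom_eq_two_mul_choose] at h
        nlinarith [h]
      rw [hD]
      rw [Nat.cast_sub hle]
      push_cast
      rw [catalan_cast k]
      field_simp
      ring
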